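/- Let n = n′ + m with m ≥ 3, and embed so(m) into so(n) as the lower-right m×m diagonal block and so(n′) as the upper-left n′×n′ diagonal block. Then the centralizer of the embedded so(m) in so(n) is exactly the embedded so(n′): {X ∈ so(n) : [X, ι(Y)] = 0 for all Y ∈ so(m)} = {ι′(X′) : X′ ∈ so(n′)}, where ι and ι′ denote the block embeddings. -/

import Mathlib

open Matrix

lemma stdT {m : ℕ} (i j : Fin m) :
    (Matrix.single i j (1:ℝ))ᵀ = Matrix.single j i 1 := by
  ext a b
  simp [Matrix.single, and_comm]

lemma skewGen {m : ℕ} (i j : Fin m) :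
    (Matrix.single i j (1:ℝ) - Matrix.single j i 1)ᵀ
      = -(Matrix.single i j (1:ℝ) - Matrix.single j i 1) := by
  simp [transpose_sub, stdT, neg_sub]

lemma B_entry {n' m : ℕ} (B : Matrix (Fin n') (Fin m) ℝ) (i j : Fin m) (hij : i ≠ j)
    (h : B * (Matrix.single i j (1:ℝ) - Matrix.single j i 1) = 0) (a : Fin n') :
    B a i = 0 := by
  have := congrFun (congrFun h a) j
  simpa [Matrix.mul_sub, Matrix.mul_apply, Matrix.single, Finset.sum_ite_eq,
    hij, hij.symm] using this

lemma D_entry {m : ℕ} (D : Matrix (Fin m) (Fin m) ℝ) (i j k : Fin m)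
    (hki : k ≠ i) (hkj : k ≠ j) (hij : i ≠ j)
    (h : D * (Matrix.single i j (1:ℝ) - Matrix.single j i 1)
       = (Matrix.single i j (1:ℝ) - Matrix.single j i 1) * D) :
    D k i = 0 := by
  have := congrFun (congrFun h k) j
  simpa [Matrix.mul_sub, Matrix.sub_mul, Matrix.mul_apply, Matrix.single,
    Finset.sum_ite_eq, hij, hij.symm, hki, hki.symm, hkj, hkj.symm] using this

theorem centralizer_of_embedded_so (n' m : ℕ) (hm : 3 ≤ m) :
    {X : Matrix (Fin n' ⊕ Fin m) (Fin n' ⊕ Fin m) ℝ | Xᵀ = -X ∧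
        ∀ Y : Matrix (Fin m) (Fin m) ℝ, Yᵀ = -Y →
          X * Matrix.fromBlocks 0 0 0 Y = Matrix.fromBlocks 0 0 0 Y * X}
      = {Z : Matrix (Fin n' ⊕ Fin m) (Fin n' ⊕ Fin m) ℝ |
          ∃ X' : Matrix (Fin n') (Fin n') ℝ, X'ᵀ = -X' ∧
            Z = Matrix.fromBlocks X' 0 0 0} := by
  ext X
  simp only [Set.mem_setOf_eq]
  constructor
  · rintro ⟨hskew, hcomm⟩
    set A := X.toBlocks₁₁ with hA
    set B := X.toBlocks₁₂ with hB
    set C := X.toBlocks₂₁ with hC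
    set D := X.toBlocks₂₂ with hD
    have hX : X = fromBlocks A B C D := (Matrix.fromBlocks_toBlocks X).symm
    -- block equations
    have key : ∀ Y : Matrix (Fin m) (Fin m) ℝ, Yᵀ = -Y → B * Y = 0 ∧ D * Y = Y * D := by
      intro Y hY
      have h := hcomm Y hY
      rw [hX, Matrix.fromBlocks_multiply, Matrix.fromBlocks_multiply] at h
      constructor
      · have := congrArg Matrix.toBlocks₁₂ h
        simpa using this
      · have := congrArg Matrix.toBlocks₂₂ h
        simpa using this
    -- B = 0
    have hB0 : B = 0 := by
      ext a i
      obtain ⟨j, hij⟩ : ∃ j : Fin m, i ≠ j := by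
        obtain ⟨j, hj⟩ := Fintype.exists_ne_of_one_lt_card (by simpa using (by omega : 1 < m)) i
        exact ⟨j, hj.symm⟩
      exact B_entry B i j hij (key _ (skewGen i j)).1 a
    -- D = 0
    have hD0 : D = 0 := by
      ext k i
      by_cases hki : k = i
      · subst hki
        have := congrFun (congrFun hskew (Sum.inr k)) (Sum.inr k)
        simp only [Matrix.transpose_apply, Matrix.neg_apply] at this
        have hDkk : X (Sum.inr k) (Sum.inr k) = 0 := by linarith
        simpa [hD, Matrix.toBlocks₂₂] using hDkk
      · -- pick j distinct from k and i
        obtain ⟨j, hj⟩ : ∃ j : Fin m, j ≠ k ∧ j ≠ i := by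
          have hne : ({k, i} : Finset (Fin m))ᶜ.Nonempty := by
            rw [← Finset.card_pos, Finset.card_compl]
            have h1 := Finset.card_insert_le k ({i} : Finset (Fin m))
            simp only [Finset.card_singleton, Fintype.card_fin] at h1 ⊢
            omega
          obtain ⟨j, hj⟩ := hne
          simp only [Finset.mem_compl, Finset.mem_insert, Finset.mem_singleton, not_or] at hj
          exact ⟨j, hj.1, hj.2⟩
        exact D_entry D i j k hki hj.1.symm (fun h => hj.2 h.symm)
          (key _ (skewGen i j)).2
    -- C = 0 from skewness
    have hC0 : C = 0 := by
      ext i a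
      have := congrFun (congrFun hskew (Sum.inl a)) (Sum.inr i)
      simp only [Matrix.transpose_apply, Matrix.neg_apply] at this
      have hBa : X (Sum.inl a) (Sum.inr i) = 0 := by
        have := congrFun (congrFun hB0 a) i
        simpa [hB, Matrix.toBlocks₁₂] using this
      simp [hC, Matrix.toBlocks₂₁, this, hBa]
    refine ⟨A, ?_, by rw [hX, hB0, hC0, hD0]⟩
    · ext a b
      have := congrFun (congrFun hskew (Sum.inl a)) (Sum.inl b)
      simpa [hA, Matrix.toBlocks₁₁] using this
  · rintro ⟨X', hskew, rfl⟩
    refine ⟨?_, fun Y hY => ?_⟩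
    · simp [Matrix.fromBlocks_transpose, hskew, Matrix.fromBlocks_neg]
    · simp [Matrix.fromBlocks_multiply]
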